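/- With notation as in the broken circuit sheaf: for any flat F ≠ ∅, the reduction of the stalk R^{bc}(F) = R[Δ^{bc}_{H_F}] modulo the linear forms from V(F) vanishes in degrees ≥ 2·rk F, while the kernel R^{bc}(F, ∂F) of the restriction to ∂F is concentrated in degree 2·rk F (since ∪_{E<F} Δ^{bc}_{H_E} is the (rk F − 2)-skeleton of Δ^{bc}_{H_F}). Consequently the induced map from the reduction of R^{bc}(F,∂F) to the reduction of R^{bc}(F) is zero, and R^{bc} is indecomposable as an A-module. -/

import Mathlib

set_option linter.unusedSectionVars false


open MvPolynomial

variable {I : Type} [Fintype I] [DecidableEq I] [LinearOrder I]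

def IsFlat (V : AffineSubspace ℝ (I → ℝ)) (F : Finset I) : Prop :=
  ∃ x ∈ V, ∀ i : I, i ∈ F ↔ x i = 0

def Essential (V : AffineSubspace ℝ (I → ℝ)) : Prop :=
  ∀ i : I, ∃ x ∈ V, ∃ y ∈ V, x i ≠ y i

noncomputable def resF (V : AffineSubspace ℝ (I → ℝ)) (F : Finset I) :
    V.direction →ₗ[ℝ] ({i : I // i ∈ F} → ℝ) :=
  (LinearMap.funLeft ℝ ℝ (fun i : {i : I // i ∈ F} => (i : I))).comp V.direction.subtype

/-- The rank of a flat `F`: the codimension of `H_F`, i.e. the dimension of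
`V(F) = V₀/⟨F⟩`, i.e. the rank of the evaluation map `V₀ → ℝ^F`. -/
noncomputable def rkF (V : AffineSubspace ℝ (I → ℝ)) (F : Finset I) : ℕ :=
  Module.finrank ℝ (LinearMap.range (resF V F))

def Face (V : AffineSubspace ℝ (I → ℝ)) (S : Finset I) : Prop :=
  Function.Surjective (resF V S)

def Circuit (V : AffineSubspace ℝ (I → ℝ)) (C : Finset I) : Prop :=
  ¬ Face V C ∧ ∀ D : Finset I, D ⊂ C → Face V D

def BCFace (V : AffineSubspace ℝ (I → ℝ)) (F : Finset I) (S : Finset I) : Prop :=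
  S ⊆ F ∧ Face V S ∧
    ∀ C : Finset I, Circuit V C → C ⊆ F →
      ∀ m ∈ C, (∀ j ∈ C, m ≤ j) → ¬ C.erase m ⊆ S

noncomputable def faceIdeal (Δ : Set (Finset I)) : Ideal (MvPolynomial I ℝ) :=
  Ideal.span {p | ∃ S : Finset I, S ∉ Δ ∧ p = ∏ i ∈ S, (X i : MvPolynomial I ℝ)}

/-- The ideal generated by the linear forms coming from `V(F)`, i.e. the restrictions
to `F` of the linear forms `∑ v_i e_i`, `v ∈ V₀`. -/
noncomputable def linIdeal (V : AffineSubspace ℝ (I → ℝ)) (F : Finset I) :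
    Ideal (MvPolynomial I ℝ) :=
  Ideal.span {p | ∃ v ∈ V.direction, p = ∑ i ∈ F, v i • (X i : MvPolynomial I ℝ)}

/-- The preimage in `ℝ[e_i : i ∈ I]` of the costalk `R^{bc}(F, ∂F)`: the polynomials
restricting to zero in every stalk `R^{bc}(E)` for flats `E < F`. -/
noncomputable def costalkIdeal (V : AffineSubspace ℝ (I → ℝ)) (F : Finset I) :
    Ideal (MvPolynomial I ℝ) :=
  ⨅ (E : Finset I) (_ : IsFlat V E ∧ E ⊂ F), faceIdeal {S | BCFace V E S}


variable {V : AffineSubspace ℝ (I → ℝ)}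

lemma resF_apply (S : Finset I) (v : V.direction) (i : {i : I // i ∈ S}) :
    resF V S v i = (v : I → ℝ) i := rfl

lemma resF_eq_comp {S T : Finset I} (hTS : T ⊆ S) :
    resF V T = (LinearMap.funLeft ℝ ℝ
      (fun i : {i : I // i ∈ T} => (⟨(i : I), hTS i.2⟩ : {i : I // i ∈ S}))).comp
        (resF V S) := by
  ext v i
  rfl

lemma face_mono {S T : Finset I} (hTS : T ⊆ S) (hS : Face V S) : Face V T := by
  rw [Face, resF_eq_comp hTS]
  rw [LinearMap.coe_comp]
  exact (LinearMap.funLeft_surjective_of_injective _ _ _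
    (fun a b hab => Subtype.ext (by simpa using congrArg Subtype.val hab))).comp hS

lemma face_empty : Face V (∅ : Finset I) := by
  intro g
  exact ⟨0, funext fun i => (Finset.notMem_empty _ i.2).elim⟩

lemma face_card_le {S F : Finset I} (hSF : S ⊆ F) (hS : Face V S) :
    S.card ≤ rkF V F := by
  classical
  have h1 : LinearMap.range (resF V S) = ⊤ := LinearMap.range_eq_top.2 hS
  have h2 : resF V S = (LinearMap.funLeft ℝ ℝ
      (fun i : {i : I // i ∈ S} => (⟨(i : I), hSF i.2⟩ : {i : I // i ∈ F}))).comp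
        (resF V F) := resF_eq_comp hSF
  have h3 : LinearMap.range (resF V S)
      = (LinearMap.range (resF V F)).map (LinearMap.funLeft ℝ ℝ
        (fun i : {i : I // i ∈ S} => (⟨(i : I), hSF i.2⟩ : {i : I // i ∈ F}))) := by
    rw [h2, LinearMap.range_comp]
  have h4 : Module.finrank ℝ (LinearMap.range (resF V S)) ≤ rkF V F := by
    rw [h3]; exact Submodule.finrank_map_le _ _
  rwa [h1, finrank_top, Module.finrank_pi, Fintype.card_coe] at h4

lemma exists_circuit {S : Finset I} (hS : ¬ Face V S) :
    ∃ C ⊆ S, Circuit V C := by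
  classical
  induction S using Finset.strongInduction with
  | _ S ih =>
    by_cases h : ∀ D : Finset I, D ⊂ S → Face V D
    · exact ⟨S, subset_rfl, hS, h⟩
    · push_neg at h
      obtain ⟨D, hDS, hD⟩ := h
      obtain ⟨C, hCD, hC⟩ := ih D hDS hD
      exact ⟨C, hCD.trans hDS.subset, hC⟩

lemma circuit_nonempty {C : Finset I} (hC : Circuit V C) : C.Nonempty := by
  rcases C.eq_empty_or_nonempty with h | h
  · exact absurd (h ▸ face_empty) hC.1
  · exact h

lemma bcface_face {F S : Finset I} (h : BCFace V F S) : Face V S := by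
  by_contra hS
  obtain ⟨C, hCS, hC⟩ := exists_circuit hS
  have hCne := circuit_nonempty hC
  exact h.2.2 C hC (hCS.trans h.1) (C.min' hCne) (C.min'_mem hCne)
    (fun j hj => C.min'_le j hj) ((C.erase_subset _).trans hCS)

lemma bcface_card_le {F S : Finset I} (h : BCFace V F S) : S.card ≤ rkF V F :=
  face_card_le h.1 (bcface_face h)

lemma bcface_mono {F S T : Finset I} (hTS : T ⊆ S) (h : BCFace V F S) : BCFace V F T :=
  ⟨hTS.trans h.1, face_mono hTS (bcface_face h),
    fun C hC hCF m hm hmin hsub => h.2.2 C hC hCF m hm hmin (hsub.trans hTS)⟩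

lemma facet_min_mem {F S : Finset I} (hFne : F.Nonempty) (h : BCFace V F S)
    (hcard : S.card = rkF V F) : F.min' hFne ∈ S := by
  classical
  set e := F.min' hFne with he
  by_contra heS
  have heF : e ∈ F := F.min'_mem hFne
  have hSF : S ⊆ F := h.1
  have hsub : insert e S ⊆ F := Finset.insert_subset heF hSF
  have hnface : ¬ Face V (insert e S) := by
    intro hface
    have := face_card_le hsub hface
    rw [Finset.card_insert_of_notMem heS, hcard] at this
    omega
  obtain ⟨C, hCsub, hC⟩ := exists_circuit hnface
  by_cases heC : e ∈ C
  · have hmin : ∀ j ∈ C, e ≤ j := fun j hj => F.min'_le j (hsub (hCsub hj))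
    have := h.2.2 C hC (hCsub.trans hsub) e heC hmin
    apply this
    intro x hx
    have hxC : x ∈ C := Finset.mem_of_mem_erase hx
    have hxne : x ≠ e := Finset.ne_of_mem_erase hx
    rcases Finset.mem_insert.1 (hCsub hxC) with h' | h'
    · exact absurd h' hxne
    · exact h'
  · have hCS : C ⊆ S := fun x hx => by
      rcases Finset.mem_insert.1 (hCsub hx) with h' | h'
      · exact absurd (h' ▸ hx) heC
      · exact h'
    have hCne := circuit_nonempty hC
    exact h.2.2 C hC (hCS.trans hSF) (C.min' hCne) (C.min'_mem hCne)
      (fun j hj => C.min'_le j hj) ((C.erase_subset _).trans hCS)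

lemma prod_X_eq_monomial (S : Finset I) :
    (∏ i ∈ S, (X i : MvPolynomial I ℝ)) = monomial (∑ i ∈ S, Finsupp.single i 1) 1 := by
  classical
  induction S using Finset.induction with
  | empty => simp [monomial_zero']
  | insert _ _ hx ih =>
    rw [Finset.prod_insert hx, Finset.sum_insert hx, ih, X, monomial_mul, one_mul]

lemma support_sum_single (S : Finset I) :
    (∑ i ∈ S, Finsupp.single i (1:ℕ)).support = S := by
  classical
  induction S using Finset.induction with
  | empty => simp
  | insert x s hx ih =>
    rw [Finset.sum_insert hx]
    rw [Finsupp.support_add_eq, Finsupp.support_single_ne_zero _ one_ne_zero, ih,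
      ← Finset.insert_eq]
    rw [Finsupp.support_single_ne_zero _ one_ne_zero, ih]
    simpa using hx

lemma monomial_mem_faceIdeal {Δ : Set (Finset I)} {a : I →₀ ℕ} (c : ℝ)
    (h : a.support ∉ Δ) : (monomial a c : MvPolynomial I ℝ) ∈ faceIdeal Δ := by
  classical
  set d : I →₀ ℕ := ∑ i ∈ a.support, Finsupp.single i 1 with hd
  have hda : d + (a - d) = a := by
    ext i
    have hdi : d i = if i ∈ a.support then 1 else 0 := by
      rw [hd, Finsupp.finset_sum_apply]
      by_cases hi : i ∈ a.support
      · rw [Finset.sum_eq_single i (fun b _ hb => Finsupp.single_eq_of_ne' hb)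
          (fun h' => absurd hi h'), Finsupp.single_eq_same, if_pos hi]
      · rw [if_neg hi, Finset.sum_eq_zero]
        intro b hb
        exact Finsupp.single_eq_of_ne' (fun hbi => hi (hbi ▸ hb))
    simp only [Finsupp.add_apply, Finsupp.tsub_apply, hdi]
    by_cases hi : i ∈ a.support
    · simp only [if_pos hi]
      have : 1 ≤ a i := Nat.one_le_iff_ne_zero.2 (Finsupp.mem_support_iff.1 hi)
      omega
    · simp only [if_neg hi]
      have : a i = 0 := Finsupp.notMem_support_iff.1 hi
      omega
  have : (monomial a c : MvPolynomial I ℝ) =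
      (∏ i ∈ a.support, (X i : MvPolynomial I ℝ)) * monomial (a - d) c := by
    rw [prod_X_eq_monomial, monomial_mul, one_mul, ← hd, hda]
  rw [this, mul_comm]
  exact Ideal.mul_mem_left _ _ (Ideal.subset_span ⟨a.support, h, rfl⟩)

lemma mem_faceIdeal_supports {Δ : Set (Finset I)}
    (hΔ : ∀ S T : Finset I, T ⊆ S → S ∈ Δ → T ∈ Δ)
    {p : MvPolynomial I ℝ} (hp : p ∈ faceIdeal Δ) :
    ∀ a ∈ p.support, a.support ∉ Δ := by
  classical
  let M : Ideal (MvPolynomial I ℝ) :=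
    { carrier := {q | ∀ a ∈ q.support, a.support ∉ Δ}
      zero_mem' := by intro a ha; simp at ha
      add_mem' := by
        intro q r hq hr a ha
        rcases Finset.mem_union.1 (MvPolynomial.support_add ha) with h | h
        · exact hq a h
        · exact hr a h
      smul_mem' := by
        intro q r hr a ha
        have := MvPolynomial.support_mul q r ha
        rw [Finset.mem_add] at this
        obtain ⟨b, hb, c, hc, rfl⟩ := this
        intro hmem
        exact hr c hc (hΔ _ _ (by
          intro x hx
          have : c x ≠ 0 := Finsupp.mem_support_iff.1 hx
          exact Finsupp.mem_support_iff.2 (by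
            simp only [Finsupp.add_apply]
            omega)) hmem) }
  have hM : faceIdeal Δ ≤ M := by
    rw [faceIdeal, Ideal.span_le]
    rintro q ⟨S, hS, rfl⟩
    intro a ha
    rw [prod_X_eq_monomial] at ha
    rw [MvPolynomial.support_monomial, if_neg (one_ne_zero)] at ha
    rw [Finset.mem_singleton] at ha
    subst ha
    rwa [support_sum_single]
  exact hM hp

lemma sub_single_add_single {a : I →₀ ℕ} {i : I} (hi : i ∈ a.support) :
    (a - Finsupp.single i 1) + Finsupp.single i 1 = a := by
  ext j
  simp only [Finsupp.add_apply, Finsupp.tsub_apply]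
  by_cases hj : j = i
  · subst hj
    have : 1 ≤ a j := Nat.one_le_iff_ne_zero.2 (Finsupp.mem_support_iff.1 hi)
    simp only [Finsupp.single_eq_same]
    omega
  · simp [Finsupp.single_eq_of_ne' (Ne.symm hj)]

lemma reduction_identity {F : Finset I} {a : I →₀ ℕ} (c : ℝ) {i : I} {v : I → ℝ}
    (hi : i ∈ a.support) (hsupp : a.support ⊆ F) (hvi : v i = 1)
    (hv0 : ∀ j ∈ a.support, j ≠ i → v j = 0) :
    (monomial a c : MvPolynomial I ℝ) =
      monomial (a - Finsupp.single i 1) c * (∑ j ∈ F, v j • X j)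
        - ∑ j ∈ F \ a.support, v j •
            (monomial ((a - Finsupp.single i 1) + Finsupp.single j 1) c : MvPolynomial I ℝ) := by
  classical
  set a' := a - Finsupp.single i 1 with ha'
  have key : (monomial a' c : MvPolynomial I ℝ) * (∑ j ∈ F, v j • X j)
      = ∑ j ∈ F, v j • (monomial (a' + Finsupp.single j 1) c : MvPolynomial I ℝ) := by
    rw [Finset.mul_sum]
    refine Finset.sum_congr rfl fun j _ => ?_
    rw [mul_smul_comm, X, monomial_mul, mul_one]
  have hsplit : (∑ j ∈ F \ a.support, v j •
        (monomial (a' + Finsupp.single j 1) c : MvPolynomial I ℝ))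
      + (∑ j ∈ a.support, v j • (monomial (a' + Finsupp.single j 1) c : MvPolynomial I ℝ))
      = ∑ j ∈ F, v j • (monomial (a' + Finsupp.single j 1) c : MvPolynomial I ℝ) :=
    Finset.sum_sdiff hsupp
  have hsum : (∑ j ∈ a.support, v j •
      (monomial (a' + Finsupp.single j 1) c : MvPolynomial I ℝ)) = monomial a c := by
    rw [Finset.sum_eq_single i]
    · rw [hvi, one_smul, ha', sub_single_add_single hi]
    · intro j hj hji
      rw [hv0 j hj hji, zero_smul]
    · intro h
      exact absurd hi h
  rw [key, ← hsplit, hsum]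
  ring

lemma degree_add' (a b : I →₀ ℕ) :
    Finsupp.degree (a + b) = Finsupp.degree a + Finsupp.degree b := by
  simp [Finsupp.degree_eq_weight_one, map_add]

lemma degree_single_one (i : I) : Finsupp.degree (Finsupp.single i (1:ℕ)) = 1 := by
  simp [Finsupp.degree_apply, Finsupp.support_single_ne_zero _ one_ne_zero]

lemma card_support_le_degree (a : I →₀ ℕ) : a.support.card ≤ Finsupp.degree a := by
  rw [Finsupp.degree_apply]
  calc a.support.card = ∑ _i ∈ a.support, 1 := by simp
  _ ≤ ∑ i ∈ a.support, a i :=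
    Finset.sum_le_sum fun i hi => Nat.one_le_iff_ne_zero.2 (Finsupp.mem_support_iff.1 hi)

lemma exists_two_le {a : I →₀ ℕ} (h : a.support.card < Finsupp.degree a) :
    ∃ i ∈ a.support, 2 ≤ a i := by
  by_contra hc
  push_neg at hc
  have : Finsupp.degree a ≤ a.support.card := by
    rw [Finsupp.degree_apply]
    calc ∑ i ∈ a.support, a i ≤ ∑ _i ∈ a.support, 1 :=
      Finset.sum_le_sum fun i hi => by have := hc i hi; omega
    _ = a.support.card := by simp
  omega

lemma degree_sub_add {a : I →₀ ℕ} {i : I} (hi : i ∈ a.support) (j : I) :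
    Finsupp.degree ((a - Finsupp.single i 1) + Finsupp.single j 1) = Finsupp.degree a := by
  have h1 := degree_add' (a - Finsupp.single i 1) (Finsupp.single i 1)
  rw [sub_single_add_single hi] at h1
  rw [degree_add', degree_single_one, h1, degree_single_one]

lemma support_sub_single_eq {a : I →₀ ℕ} {i : I} (hi2 : 2 ≤ a i) :
    (a - Finsupp.single i 1).support = a.support := by
  ext k
  simp only [Finsupp.mem_support_iff, Finsupp.tsub_apply]
  by_cases hk : k = i
  · subst hk
    simp only [Finsupp.single_eq_same]
    omega
  · simp [Finsupp.single_eq_of_ne' (Ne.symm hk)]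

lemma support_reduce_big {a : I →₀ ℕ} {i j : I} (hi2 : 2 ≤ a i) (hj : j ∉ a.support) :
    ((a - Finsupp.single i 1) + Finsupp.single j 1).support = insert j a.support := by
  rw [Finsupp.support_add_eq, support_sub_single_eq hi2,
    Finsupp.support_single_ne_zero _ one_ne_zero]
  · rw [Finset.union_comm, ← Finset.insert_eq]
  · rw [support_sub_single_eq hi2, Finsupp.support_single_ne_zero _ one_ne_zero]
    simpa using hj

lemma support_reduce_one {a : I →₀ ℕ} {i j : I} (hi1 : a i = 1) (hj : j ∉ a.support) :
    ((a - Finsupp.single i 1) + Finsupp.single j 1).support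
      = insert j (a.support.erase i) := by
  have hsub : (a - Finsupp.single i 1).support = a.support.erase i := by
    ext k
    simp only [Finsupp.mem_support_iff, Finsupp.tsub_apply, Finset.mem_erase]
    by_cases hk : k = i
    · subst hk
      simp [Finsupp.single_eq_same, hi1]
    · simp [Finsupp.single_eq_of_ne' (Ne.symm hk), hk, Finsupp.mem_support_iff]
  rw [Finsupp.support_add_eq, hsub, Finsupp.support_single_ne_zero _ one_ne_zero]
  · rw [Finset.union_comm, ← Finset.insert_eq]
  · rw [hsub, Finsupp.support_single_ne_zero _ one_ne_zero]
    simp only [Finset.disjoint_singleton_right, Finset.mem_erase]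
    intro ⟨_, hjs⟩
    exact hj hjs

lemma exists_dir {S : Finset I} (hS : Face V S) (g : I → ℝ) :
    ∃ v ∈ V.direction, ∀ i ∈ S, v i = g i := by
  obtain ⟨v, hv⟩ := hS (fun x : {i : I // i ∈ S} => g x)
  exact ⟨(v : I → ℝ), v.2, fun i hi => congrFun hv ⟨i, hi⟩⟩

lemma smul_mem_ideal {J : Ideal (MvPolynomial I ℝ)} {q : MvPolynomial I ℝ} (r : ℝ)
    (hq : q ∈ J) : r • q ∈ J := by
  rw [MvPolynomial.smul_eq_C_mul]
  exact Ideal.mul_mem_left _ _ hq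

lemma lin_gen_mem {F : Finset I} {v : I → ℝ} (hv : v ∈ V.direction) :
    (∑ j ∈ F, v j • (X j : MvPolynomial I ℝ)) ∈ linIdeal V F :=
  Ideal.subset_span ⟨v, hv, rfl⟩

lemma all_one {a : I →₀ ℕ} (h : Finsupp.degree a ≤ a.support.card) :
    ∀ i ∈ a.support, a i = 1 := by
  intro i hi
  by_contra hne
  have h2 : 2 ≤ a i := by
    have := Finsupp.mem_support_iff.1 hi
    omega
  have hlt : ∑ _x ∈ a.support, 1 < ∑ x ∈ a.support, a x :=
    Finset.sum_lt_sum
      (fun x hx => Nat.one_le_iff_ne_zero.2 (Finsupp.mem_support_iff.1 hx))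
      ⟨i, hi, by omega⟩
  simp only [Finset.sum_const, smul_eq_mul, mul_one] at hlt
  rw [Finsupp.degree_apply] at h
  omega

lemma facet_case {F : Finset I} (hFne : F.Nonempty) {a : I →₀ ℕ} (c : ℝ)
    (hΔ : BCFace V F a.support) (hone : ∀ i ∈ a.support, a i = 1)
    (hcard : a.support.card = rkF V F) :
    (monomial a c : MvPolynomial I ℝ) ∈ faceIdeal {S | BCFace V F S} ⊔ linIdeal V F := by
  classical
  set e := F.min' hFne with he
  have heS : e ∈ a.support := facet_min_mem hFne hΔ hcard
  obtain ⟨v, hvV, hv⟩ := exists_dir (bcface_face hΔ)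
    (fun x => if x = e then (1:ℝ) else 0)
  have hvi : v e = 1 := by rw [hv e heS, if_pos rfl]
  have hv0 : ∀ j ∈ a.support, j ≠ e → v j = 0 := fun j hj hje => by
    rw [hv j hj, if_neg hje]
  have hid := reduction_identity (F := F) c heS hΔ.1 hvi hv0
  rw [hid]
  apply sub_mem
  · exact Ideal.mem_sup_right (Ideal.mul_mem_left _ _ (lin_gen_mem hvV))
  · apply Ideal.sum_mem
    intro j hj
    rw [Finset.mem_sdiff] at hj
    apply smul_mem_ideal
    apply Ideal.mem_sup_left
    apply monomial_mem_faceIdeal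
    intro hmem
    have hsup : ((a - Finsupp.single e 1) + Finsupp.single j 1).support
        = insert j (a.support.erase e) := support_reduce_one (hone e heS) hj.2
    have hje : j ≠ e := fun h => hj.2 (h ▸ heS)
    have hcard' : (insert j (a.support.erase e)).card = rkF V F := by
      rw [Finset.card_insert_of_notMem (fun h => hj.2 (Finset.mem_of_mem_erase h)),
        Finset.card_erase_of_mem heS, hcard]
      have : 1 ≤ rkF V F := by
        rw [← hcard]
        exact Finset.card_pos.2 ⟨e, heS⟩
      omega
    have := facet_min_mem hFne (S := insert j (a.support.erase e)) (hsup ▸ hmem)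
      hcard'
    rw [← he] at this
    rcases Finset.mem_insert.1 this with h' | h'
    · exact hje h'.symm
    · exact (Finset.notMem_erase e _) h'

lemma lemA {F : Finset I} (hFne : F.Nonempty) :
    ∀ (k : ℕ) (a : I →₀ ℕ) (c : ℝ), rkF V F ≤ Finsupp.degree a →
      Finsupp.degree a - a.support.card ≤ k →
      (monomial a c : MvPolynomial I ℝ) ∈ faceIdeal {S | BCFace V F S} ⊔ linIdeal V F := by
  intro k
  induction k with
  | zero =>
    intro a c hdeg hk
    by_cases hΔ : BCFace V F a.support
    swap
    · exact Ideal.mem_sup_left (monomial_mem_faceIdeal c hΔ)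
    have hcardle := card_support_le_degree a
    have hone := all_one (a := a) (by omega)
    have hcard : a.support.card = rkF V F := by
      have := bcface_card_le hΔ
      omega
    exact facet_case hFne c hΔ hone hcard
  | succ k ih =>
    intro a c hdeg hk
    by_cases hΔ : BCFace V F a.support
    swap
    · exact Ideal.mem_sup_left (monomial_mem_faceIdeal c hΔ)
    have hcardle := card_support_le_degree a
    by_cases hdc : Finsupp.degree a ≤ a.support.card
    · have hone := all_one hdc
      have hcard : a.support.card = rkF V F := by
        have := bcface_card_le hΔ
        omega
      exact facet_case hFne c hΔ hone hcard
    · push_neg at hdc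
      obtain ⟨i, hi, h2⟩ := exists_two_le hdc
      obtain ⟨v, hvV, hv⟩ := exists_dir (bcface_face hΔ)
        (fun x => if x = i then (1:ℝ) else 0)
      have hvi : v i = 1 := by rw [hv i hi, if_pos rfl]
      have hv0 : ∀ j ∈ a.support, j ≠ i → v j = 0 := fun j hj hji => by
        rw [hv j hj, if_neg hji]
      rw [reduction_identity (F := F) c hi hΔ.1 hvi hv0]
      apply sub_mem
      · exact Ideal.mem_sup_right (Ideal.mul_mem_left _ _ (lin_gen_mem hvV))
      · apply Ideal.sum_mem
        intro j hj
        rw [Finset.mem_sdiff] at hj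
        apply smul_mem_ideal
        have hdegb := degree_sub_add hi j
        have hsupb : ((a - Finsupp.single i 1) + Finsupp.single j 1).support
            = insert j a.support := support_reduce_big h2 hj.2
        apply ih
        · omega
        · rw [hsupb, Finset.card_insert_of_notMem hj.2]
          omega

lemma mem_costalk_iff {F : Finset I} {p : MvPolynomial I ℝ} :
    p ∈ costalkIdeal V F ↔ ∀ E : Finset I, IsFlat V E → E ⊂ F →
      p ∈ faceIdeal {S | BCFace V E S} := by
  simp only [costalkIdeal, Ideal.mem_iInf, and_imp]

lemma monomial_mem_costalk {F : Finset I} {a : I →₀ ℕ} (c : ℝ)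
    (h : ∀ E : Finset I, IsFlat V E → E ⊂ F → ¬ BCFace V E a.support) :
    (monomial a c : MvPolynomial I ℝ) ∈ costalkIdeal V F :=
  mem_costalk_iff.2 fun E hE hEF => monomial_mem_faceIdeal c (h E hE hEF)

lemma mem_costalk_supports {F : Finset I} {p : MvPolynomial I ℝ}
    (hp : p ∈ costalkIdeal V F) :
    ∀ a ∈ p.support, ∀ E : Finset I, IsFlat V E → E ⊂ F → ¬ BCFace V E a.support :=
  fun a ha E hE hEF =>
    mem_faceIdeal_supports (fun _ _ hTS hS => bcface_mono hTS hS)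
      (mem_costalk_iff.1 hp E hE hEF) a ha

lemma lemA' {F : Finset I} :
    ∀ (k : ℕ) (a : I →₀ ℕ) (c : ℝ),
      (∀ E : Finset I, IsFlat V E → E ⊂ F → ¬ BCFace V E a.support) →
      rkF V F < Finsupp.degree a →
      Finsupp.degree a - a.support.card ≤ k →
      (monomial a c : MvPolynomial I ℝ) ∈
        faceIdeal {S | BCFace V F S} ⊔ linIdeal V F * costalkIdeal V F := by
  intro k
  induction k with
  | zero =>
    intro a c hbd hdeg hk
    by_cases hΔ : BCFace V F a.support
    swap
    · exact Ideal.mem_sup_left (monomial_mem_faceIdeal c hΔ)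
    have := bcface_card_le hΔ
    omega
  | succ k ih =>
    intro a c hbd hdeg hk
    by_cases hΔ : BCFace V F a.support
    swap
    · exact Ideal.mem_sup_left (monomial_mem_faceIdeal c hΔ)
    have hcardle := bcface_card_le hΔ
    have hdc : a.support.card < Finsupp.degree a := by omega
    obtain ⟨i, hi, h2⟩ := exists_two_le hdc
    obtain ⟨v, hvV, hv⟩ := exists_dir (bcface_face hΔ)
      (fun x => if x = i then (1:ℝ) else 0)
    have hvi : v i = 1 := by rw [hv i hi, if_pos rfl]
    have hv0 : ∀ j ∈ a.support, j ≠ i → v j = 0 := fun j hj hji => by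
      rw [hv j hj, if_neg hji]
    rw [reduction_identity (F := F) c hi hΔ.1 hvi hv0]
    apply sub_mem
    · apply Ideal.mem_sup_right
      rw [mul_comm (monomial (a - Finsupp.single i 1) c)]
      apply Ideal.mul_mem_mul (lin_gen_mem hvV)
      apply monomial_mem_costalk
      rw [support_sub_single_eq h2]
      exact hbd
    · apply Ideal.sum_mem
      intro j hj
      rw [Finset.mem_sdiff] at hj
      apply smul_mem_ideal
      have hdegb := degree_sub_add hi j
      have hsupb : ((a - Finsupp.single i 1) + Finsupp.single j 1).support
          = insert j a.support := support_reduce_big h2 hj.2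
      apply ih
      · intro E hE hEF hBC
        rw [hsupb] at hBC
        exact hbd E hE hEF (bcface_mono (Finset.subset_insert j a.support) hBC)
      · omega
      · rw [hsupb, Finset.card_insert_of_notMem hj.2]
        omega

lemma generic_point (U : Submodule ℝ (I → ℝ)) (c : I → ℝ) (B : Finset I)
    (h : ∀ i ∈ B, ∃ u ∈ U, c i + u i ≠ 0) :
    ∃ u ∈ U, ∀ i ∈ B, c i + u i ≠ 0 := by
  classical
  induction B using Finset.induction with
  | empty => exact ⟨0, U.zero_mem, by simp⟩
  | @insert x B hx ih =>
    obtain ⟨u, hu, hugen⟩ := ih (fun i hi => h i (Finset.mem_insert_of_mem hi))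
    by_cases hux : c x + u x = 0
    case neg =>
      exact ⟨u, hu, fun i hi => by
        rcases Finset.mem_insert.1 hi with h' | h'
        · exact h' ▸ hux
        · exact hugen i h'⟩
    case pos =>
      obtain ⟨w, hw, hwx⟩ := h x (Finset.mem_insert_self x B)
      set T : Finset ℝ :=
        (insert x B).image (fun j => -(c j + u j) / (w j - u j)) with hT
      obtain ⟨t, ht⟩ := Infinite.exists_notMem_finset T
      refine ⟨u + t • (w - u), ?_, ?_⟩
      · exact U.add_mem hu (U.smul_mem t (U.sub_mem hw hu))
      · intro j hj
        have hval : c j + (u + t • (w - u)) j = (c j + u j) + t * (w j - u j) := by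
          simp [Pi.add_apply, Pi.smul_apply, Pi.sub_apply]
          ring
        rw [hval]
        by_cases hb : w j - u j = 0
        · rw [hb, mul_zero, add_zero]
          rcases Finset.mem_insert.1 hj with h' | h'
          · subst h'
            exfalso
            apply hwx
            have : w j = u j := by linarith [sub_eq_zero.1 hb]
            rw [this, hux]
          · exact hugen j h'
        · intro heq
          apply ht
          rw [hT]
          apply Finset.mem_image.2
          exact ⟨j, hj, by field_simp; linarith⟩

lemma exists_ker_diff {S F : Finset I} (hSF : S ⊆ F) (hS : Face V S)
    (hcard : S.card < rkF V F) :
    ∃ v : V.direction, (∀ i ∈ S, (v : I → ℝ) i = 0) ∧ ∃ i ∈ F, (v : I → ℝ) i ≠ 0 := by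
  classical
  have hKle : LinearMap.ker (resF V F) ≤ LinearMap.ker (resF V S) := by
    intro v hv
    rw [LinearMap.mem_ker] at hv ⊢
    rw [resF_eq_comp hSF, LinearMap.comp_apply, hv, map_zero]
  have h1 : Module.finrank ℝ (LinearMap.range (resF V S))
      + Module.finrank ℝ (LinearMap.ker (resF V S))
      = Module.finrank ℝ V.direction :=
    LinearMap.finrank_range_add_finrank_ker (resF V S)
  have h2 : rkF V F + Module.finrank ℝ (LinearMap.ker (resF V F))
      = Module.finrank ℝ V.direction :=
    LinearMap.finrank_range_add_finrank_ker (resF V F)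
  have h3 : Module.finrank ℝ (LinearMap.range (resF V S)) = S.card := by
    rw [LinearMap.range_eq_top.2 hS, finrank_top, Module.finrank_pi, Fintype.card_coe]
  have hlt : LinearMap.ker (resF V F) < LinearMap.ker (resF V S) := by
    rcases hKle.lt_or_eq with h | h
    · exact h
    · exfalso
      rw [h] at h2
      omega
  obtain ⟨v, hvS, hvF⟩ := SetLike.exists_of_lt hlt
  rw [LinearMap.mem_ker] at hvS
  refine ⟨v, fun i hi => congrFun hvS ⟨i, hi⟩, ?_⟩
  by_contra hc
  push_neg at hc
  apply hvF
  rw [LinearMap.mem_ker]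
  funext i
  exact hc i i.2

lemma skeleton {F S : Finset I} (hF : IsFlat V F) (hS : BCFace V F S)
    (hcard : S.card < rkF V F) :
    ∃ E : Finset I, IsFlat V E ∧ E ⊂ F ∧ BCFace V E S := by
  classical
  obtain ⟨xF, hxFV, hxFiff⟩ := hF
  obtain ⟨v₀, hv₀S, i₀, hi₀F, hi₀ne⟩ := exists_ker_diff hS.1 (bcface_face hS) hcard
  let U : Submodule ℝ (I → ℝ) :=
    { carrier := {u | u ∈ V.direction ∧ ∀ i ∈ S, u i = 0}
      zero_mem' := ⟨V.direction.zero_mem, fun i _ => rfl⟩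
      add_mem' := fun ha hb => ⟨V.direction.add_mem ha.1 hb.1,
        fun i hi => by simp [ha.2 i hi, hb.2 i hi]⟩
      smul_mem' := fun t u hu => ⟨V.direction.smul_mem t hu.1,
        fun i hi => by simp [hu.2 i hi]⟩ }
  set B : Finset I := Finset.univ.filter (fun i => ∃ u ∈ U, xF i + u i ≠ 0) with hB
  obtain ⟨u, hu, hgen⟩ := generic_point U xF B
    (fun i hi => by
      rw [hB, Finset.mem_filter] at hi
      exact hi.2)
  set x : I → ℝ := xF + u with hx
  have hxV : x ∈ V := by
    have : u +ᵥ xF ∈ V := AffineSubspace.vadd_mem_of_mem_direction hu.1 hxFV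
    have hxe : x = u +ᵥ xF := by
      funext i
      simp [hx, add_comm]
    rwa [hxe]
  set E : Finset I := Finset.univ.filter (fun i => x i = 0) with hE
  have hEmem : ∀ i : I, i ∈ E ↔ x i = 0 := fun i => by
    rw [hE, Finset.mem_filter]
    simp
  have hSE : S ⊆ E := by
    intro i hi
    rw [hEmem]
    have h1 : xF i = 0 := (hxFiff i).1 (hS.1 hi)
    have h2 : u i = 0 := hu.2 i hi
    simp [hx, h1, h2]
  have hEF : E ⊆ F := by
    intro i hi
    rw [hEmem] at hi
    by_cases hiB : i ∈ B
    · exact absurd hi (hgen i hiB)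
    · rw [hB, Finset.mem_filter] at hiB
      push_neg at hiB
      have := hiB (Finset.mem_univ i) 0 U.zero_mem
      rw [(hxFiff i)]
      simpa using this
  have hEne : E ≠ F := by
    intro heq
    have hv₀U : (v₀ : I → ℝ) ∈ U := ⟨v₀.2, hv₀S⟩
    have hi₀B : i₀ ∈ B := by
      rw [hB, Finset.mem_filter]
      refine ⟨Finset.mem_univ _, (v₀ : I → ℝ), hv₀U, ?_⟩
      rw [(hxFiff i₀).1 hi₀F, zero_add]
      exact hi₀ne
    have : i₀ ∉ E := fun h => (hgen i₀ hi₀B) ((hEmem i₀).1 h)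
    exact this (heq ▸ hi₀F)
  refine ⟨E, ⟨x, hxV, hEmem⟩, Finset.ssubset_iff_subset_ne.2 ⟨hEF, hEne⟩,
    hSE, bcface_face hS, ?_⟩
  intro C hC hCE m hm hmin hsub
  exact hS.2.2 C hC (hCE.trans hEF) m hm hmin hsub

lemma small_mono {F : Finset I} (hF : IsFlat V F) {a : I →₀ ℕ} (c : ℝ)
    (hbd : ∀ E : Finset I, IsFlat V E → E ⊂ F → ¬ BCFace V E a.support)
    (hdeg : Finsupp.degree a < rkF V F) :
    (monomial a c : MvPolynomial I ℝ) ∈ faceIdeal {S | BCFace V F S} := by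
  apply monomial_mem_faceIdeal
  intro hΔ
  have hcard : a.support.card < rkF V F :=
    lt_of_le_of_lt (card_support_le_degree a) hdeg
  obtain ⟨E, hE, hEF, hBCE⟩ := skeleton hF hΔ hcard
  exact hbd E hE hEF hBCE

/-- for a flat `F ≠ ∅`, (1) the reduction of the stalk
`R^{bc}(F) = ℝ[Δ^{bc}_{H_F}]` modulo the linear forms from `V(F)` vanishes in degrees
`≥ 2 rk F` (every homogeneous polynomial of degree `≥ rk F` lies in the face ideal plus
the ideal of linear forms); (2) the kernel `R^{bc}(F, ∂F)` is concentrated in degree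
`2 rk F` (a homogeneous element of the costalk of degree `≠ rk F` dies in the
reduction of the costalk); and (3) consequently the induced map from the reduction of
`R^{bc}(F, ∂F)` to the reduction of `R^{bc}(F)` is zero. -/
theorem stmt13 (V : AffineSubspace ℝ (I → ℝ))
    (hne : (V : Set (I → ℝ)).Nonempty) (hess : Essential V)
    (F : Finset I) (hF : IsFlat V F) (hFne : F ≠ ∅) :
    (∀ (p : MvPolynomial I ℝ) (d : ℕ), p.IsHomogeneous d → rkF V F ≤ d →
        p ∈ faceIdeal {S | BCFace V F S} ⊔ linIdeal V F) ∧
    (∀ (p : MvPolynomial I ℝ) (d : ℕ), p.IsHomogeneous d →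
        p ∈ costalkIdeal V F → d ≠ rkF V F →
        p ∈ faceIdeal {S | BCFace V F S} ⊔ linIdeal V F * costalkIdeal V F) ∧
    costalkIdeal V F ≤ faceIdeal {S | BCFace V F S} ⊔ linIdeal V F := by
  have hFne' : F.Nonempty := Finset.nonempty_iff_ne_empty.2 hFne
  refine ⟨?_, ?_, ?_⟩
  · intro p d hhom hd
    rw [p.as_sum]
    apply Ideal.sum_mem
    intro a ha
    have hdeg : Finsupp.degree a = d := by
      rw [Finsupp.degree_eq_weight_one]
      exact hhom (MvPolynomial.mem_support_iff.1 ha)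
    exact lemA hFne' (Finsupp.degree a) a _ (by omega) (Nat.sub_le _ _)
  · intro p d hhom hcost hdne
    have hbd := mem_costalk_supports hcost
    rw [p.as_sum]
    apply Ideal.sum_mem
    intro a ha
    have hdeg : Finsupp.degree a = d := by
      rw [Finsupp.degree_eq_weight_one]
      exact hhom (MvPolynomial.mem_support_iff.1 ha)
    rcases Nat.lt_or_ge d (rkF V F) with hlt | hge
    · exact Ideal.mem_sup_left (small_mono hF _ (hbd a ha) (by omega))
    · have hgt : rkF V F < d := lt_of_le_of_ne hge (Ne.symm hdne)
      exact lemA' (Finsupp.degree a) a _ (hbd a ha) (by omega) (Nat.sub_le _ _)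
  · intro p hp
    rw [p.as_sum]
    apply Ideal.sum_mem
    intro a ha
    have hbd := mem_costalk_supports hp a ha
    rcases Nat.lt_or_ge (Finsupp.degree a) (rkF V F) with hlt | hge
    · exact Ideal.mem_sup_left (small_mono hF _ hbd hlt)
    · exact lemA hFne' (Finsupp.degree a) a _ hge (Nat.sub_le _ _)
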